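/- Let c be a real number with 0 ≤ c ≤ 1, set s² = 1 − c², and let n be a positive integer. For each k ∈ {1,…,n} consider independent {0,1}-valued random variables X_k, X_{k+1}, …, X_n, each equal to 1 with probability s², and define the guess ĝ as the smallest index j ∈ {k,…,n} with X_j = 1 if such an index exists, and ĝ = n otherwise. Then the average success probability of this basic local strategy, (1/n) Σ_{k=1}^n P(ĝ = k under the model with change point at k), equals 1 − c² + c²/n. -/

import Mathlib

open BigOperators

/-- the basic local strategy for the change point succeeds with average
probability `1 − c² + c²/n`.  When the change point is at position `k` (0-based `k : Fin n`
for the 1-based `k ∈ {1,…,n}`), the measurement outcomes at positions `j ≥ k` are independent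
Bernoulli variables `ω j` with success probability `s² = 1 − c²`; the guess is the smallest
position `j ≥ k` with `ω j = true`, and the last position `n` (0-based `n−1`) if there is
none.  The success probability for change point `k` is written as a sum over all outcome
configurations `ω`, weighted by their probabilities. -/
theorem basic_local_strategy_success_probability
    (c : ℝ) (hc0 : 0 ≤ c) (hc1 : c ≤ 1) (n : ℕ) (hn : 0 < n)
    (guess : (k : Fin n) → ({j : Fin n // k ≤ j} → Bool) → Fin n)
    (hguess : ∀ (k : Fin n) (ω : {j : Fin n // k ≤ j} → Bool),
      guess k ω =
        if h : (Finset.univ.filter fun j : {j : Fin n // k ≤ j} => ω j = true).Nonempty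
        then ((Finset.univ.filter fun j : {j : Fin n // k ≤ j} => ω j = true).min' h).1
        else ⟨n - 1, by omega⟩) :
    (1 / n : ℝ) *
        ∑ k : Fin n, ∑ ω : {j : Fin n // k ≤ j} → Bool,
          (∏ j : {j : Fin n // k ≤ j}, (if ω j then 1 - c ^ 2 else c ^ 2)) *
            (if guess k ω = k then 1 else 0) =
      1 - c ^ 2 + c ^ 2 / n := by
  have key : ∀ k : Fin n,
      (∑ ω : {j : Fin n // k ≤ j} → Bool,
          (∏ j : {j : Fin n // k ≤ j}, (if ω j then 1 - c ^ 2 else c ^ 2)) *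
            (if guess k ω = k then 1 else 0)) =
      if (k : ℕ) = n - 1 then 1 else 1 - c ^ 2 := by
    intro k
    set k0 : {j : Fin n // k ≤ j} := ⟨k, le_refl k⟩ with hk0
    by_cases hlast : (k : ℕ) = n - 1
    · -- indicator is always 1
      have hind : ∀ ω : {j : Fin n // k ≤ j} → Bool, guess k ω = k := by
        intro ω
        rw [hguess]
        split
        · next h =>
          have hm := Finset.min'_mem _ h
          have hle : k ≤ (Finset.univ.filter fun j : {j : Fin n // k ≤ j} => ω j = true).min' h :=
            ((Finset.univ.filter fun j : {j : Fin n // k ≤ j} => ω j = true).min' h).2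
          have hlt := ((Finset.univ.filter fun j : {j : Fin n // k ≤ j} => ω j = true).min' h).1.2
          have := k.2
          apply Fin.ext
          simp only [Fin.le_def] at hle
          omega
        · apply Fin.ext
          have := k.2
          simp only []
          omega
      have hone : ∀ ω : {j : Fin n // k ≤ j} → Bool,
          (if guess k ω = k then (1 : ℝ) else 0) = 1 := fun ω => if_pos (hind ω)
      simp only [hone, mul_one, if_pos hlast]
      rw [← Fintype.prod_sum (fun (j : {j : Fin n // k ≤ j}) (b : Bool) =>
        (if b then 1 - c ^ 2 else c ^ 2 : ℝ))]
      simp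
    · -- indicator is [ω k0 = true]
      have hind : ∀ ω : {j : Fin n // k ≤ j} → Bool,
          (guess k ω = k) ↔ ω k0 = true := by
        intro ω
        rw [hguess]
        constructor
        · intro h
          by_contra hωk
          revert h
          split
          · next hne =>
            intro h
            set m := (Finset.univ.filter fun j : {j : Fin n // k ≤ j} => ω j = true).min' hne
            have hmem : m ∈ _ := Finset.min'_mem _ hne
            have hωm : ω m = true := (Finset.mem_filter.mp hmem).2
            have hkm : k ≤ m.1 := m.2
            have : m = k0 := by
              apply Subtype.ext; apply Fin.ext
              have : m.1 = k := h
              simp [this, hk0]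
            rw [this] at hωm
            exact hωk hωm
          · intro h
            have := k.2
            have : (k : ℕ) = n - 1 := by
              have := congrArg Fin.val h
              simpa using this.symm
            exact hlast this
        · intro hωk
          have hne : (Finset.univ.filter fun j : {j : Fin n // k ≤ j} => ω j = true).Nonempty :=
            ⟨k0, by simp [hωk]⟩
          rw [dif_pos hne]
          have hle := Finset.min'_le (Finset.univ.filter fun j : {j : Fin n // k ≤ j} => ω j = true) k0 (by simp [hωk])
          have hge : k ≤ ((Finset.univ.filter fun j : {j : Fin n // k ≤ j} => ω j = true).min' hne).1 :=
            ((Finset.univ.filter fun j : {j : Fin n // k ≤ j} => ω j = true).min' hne).2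
          exact le_antisymm hle hge
      have step : ∀ ω : {j : Fin n // k ≤ j} → Bool,
          (∏ j : {j : Fin n // k ≤ j}, (if ω j then 1 - c ^ 2 else c ^ 2 : ℝ)) *
            (if guess k ω = k then 1 else 0) =
          ∏ j : {j : Fin n // k ≤ j},
            (if j = k0 then (if ω j then 1 - c ^ 2 else 0) else (if ω j then 1 - c ^ 2 else c ^ 2)) := by
        intro ω
        rw [← Finset.prod_erase_mul Finset.univ _ (Finset.mem_univ k0),
            ← Finset.prod_erase_mul Finset.univ _ (Finset.mem_univ k0)]
        rw [if_pos rfl]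
        have : ∀ j ∈ Finset.univ.erase k0,
            (if j = k0 then (if ω j then 1 - c ^ 2 else 0) else (if ω j then 1 - c ^ 2 else c ^ 2 : ℝ))
            = (if ω j then 1 - c ^ 2 else c ^ 2) := by
          intro j hj
          rw [if_neg (Finset.ne_of_mem_erase hj)]
        rw [Finset.prod_congr rfl this]
        rcases Bool.eq_false_or_eq_true (ω k0) with hb | hb <;>
          first
          | (rw [hb]; simp [hind ω, hb])
          | (rw [hb]; simp [hind ω, hb]; ring)
        -- (rename_i hb; rw [hb]; simp [hind ω, hb]; try ring)
      rw [if_neg hlast]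
      calc (∑ ω : {j : Fin n // k ≤ j} → Bool,
          (∏ j : {j : Fin n // k ≤ j}, (if ω j then 1 - c ^ 2 else c ^ 2 : ℝ)) *
            (if guess k ω = k then 1 else 0))
          = ∑ ω : {j : Fin n // k ≤ j} → Bool, ∏ j : {j : Fin n // k ≤ j},
            (if j = k0 then (if ω j then 1 - c ^ 2 else 0) else (if ω j then 1 - c ^ 2 else c ^ 2 : ℝ)) := by
            exact Finset.sum_congr rfl fun ω _ => step ω
        _ = ∏ j : {j : Fin n // k ≤ j}, ∑ b : Bool,
            (if j = k0 then (if b then 1 - c ^ 2 else 0) else (if b then 1 - c ^ 2 else c ^ 2 : ℝ)) := by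
            rw [Fintype.prod_sum]
        _ = ∏ j : {j : Fin n // k ≤ j}, (if j = k0 then (1 - c ^ 2 : ℝ) else 1) := by
            apply Finset.prod_congr rfl
            intro j _
            by_cases hj : j = k0 <;> simp [hj] <;> ring
        _ = 1 - c ^ 2 := by
            rw [Finset.prod_ite_eq' Finset.univ k0 (fun _ => (1 - c ^ 2 : ℝ))]
            simp
  have hsum : (∑ k : Fin n, ∑ ω : {j : Fin n // k ≤ j} → Bool,
        (∏ j : {j : Fin n // k ≤ j}, (if ω j then 1 - c ^ 2 else c ^ 2)) *
          (if guess k ω = k then 1 else 0))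
      = ∑ k : Fin n, (if (k : ℕ) = n - 1 then (1 : ℝ) else 1 - c ^ 2) :=
    Finset.sum_congr rfl fun k _ => key k
  rw [hsum]
  have : ∑ k : Fin n, (if (k : ℕ) = n - 1 then (1 : ℝ) else 1 - c ^ 2)
      = ∑ k : Fin n, ((1 - c ^ 2) + if k = (⟨n - 1, by omega⟩ : Fin n) then (c ^ 2 : ℝ) else 0) := by
    apply Finset.sum_congr rfl
    intro k _
    by_cases hk : (k : ℕ) = n - 1
    · rw [if_pos hk, if_pos (Fin.ext hk)]; ring
    · rw [if_neg hk, if_neg (fun h => hk (congrArg Fin.val h))]; ring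
  rw [this, Finset.sum_add_distrib, Finset.sum_const, Finset.sum_ite_eq' Finset.univ,
    if_pos (Finset.mem_univ _)]
  simp only [Finset.card_univ, Fintype.card_fin, nsmul_eq_mul]
  have hn' : (n : ℝ) ≠ 0 := Nat.cast_ne_zero.mpr hn.ne'
  field_simp
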